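/- Consider minimizing the strictly convex quadratic q(x) = ½ x^T A x + b^T x on ℝ², with iterations x_{k+1} = x_k + d_k where d_0 = -α_0 g_0 with α_0 the exact minimizing stepsize, and d_k = u_k g_k + v_k s_{k-1} for k ≥ 1 given by the projection formulas with τ = 1 (g_k = A x_k + b, s_{k-1} = x_k - x_{k-1}, y_{k-1} = g_k - g_{k-1}). Then g_j = 0 for some j ≤ 3 (the method terminates finitely in at most three steps). -/

import Mathlib

open Matrix

/-- The coefficient `u_k` of the projected search direction (eq. (14) of the paper),
written with dot products (`g ⬝ᵥ g = ‖g‖²` for Euclidean vectors). -/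
noncomputable def uCoef (g s y : Fin 2 → ℝ) : ℝ :=
  -1 + (g ⬝ᵥ y) * (g ⬝ᵥ s) / ((g ⬝ᵥ g) * (s ⬝ᵥ y)) -
    ((g ⬝ᵥ g) * (g ⬝ᵥ s) - (g ⬝ᵥ y) * (g ⬝ᵥ s) ^ 2 / (s ⬝ᵥ y)) /
      ((g ⬝ᵥ g) * (s ⬝ᵥ s) - (g ⬝ᵥ s) ^ 2) * ((g ⬝ᵥ s) / (g ⬝ᵥ g))

/-- The coefficient `v_k` of the projected search direction (eq. (15) of the paper)
with scaling factor `τ`. -/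
noncomputable def vCoef (τ : ℝ) (g s y : Fin 2 → ℝ) : ℝ :=
  (g ⬝ᵥ y) / (s ⬝ᵥ y) - (τ + (y ⬝ᵥ y) / (s ⬝ᵥ y)) * ((g ⬝ᵥ s) / (s ⬝ᵥ y)) +
    ((g ⬝ᵥ g) * (g ⬝ᵥ s) - (g ⬝ᵥ y) * (g ⬝ᵥ s) ^ 2 / (s ⬝ᵥ y)) /
      ((g ⬝ᵥ g) * (s ⬝ᵥ s) - (g ⬝ᵥ s) ^ 2)

/-- A scalar identity used for the coefficient `v_2`. -/
lemma vkey (m G S : ℝ) (hm : m ≠ 0) (hG : G ≠ 0) (hS : S ≠ 0) :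
    m * G / (m * S) - (1 + m ^ 2 * G / (m * S)) * (S / (m * S)) = -m⁻¹ := by
  field_simp
  ring

/-- Symmetric matrices move across the dot product. -/
lemma symm_dot (A : Matrix (Fin 2) (Fin 2) ℝ) (hA : A.IsSymm) (v w : Fin 2 → ℝ) :
    A.mulVec v ⬝ᵥ w = v ⬝ᵥ A.mulVec w := by
  conv_lhs => rw [← hA]
  rw [mulVec_transpose, ← dotProduct_mulVec]

/-- In `ℝ²`, two vectors orthogonal to the same nonzero vector are parallel. -/
lemma parallel_of_orth (w a c : Fin 2 → ℝ) (hw : w ≠ 0) (ha : a ⬝ᵥ w = 0)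
    (hc : c ⬝ᵥ w = 0) (hane : a ≠ 0) : ∃ t : ℝ, c = t • a := by
  have hdc : ∀ u v : Fin 2 → ℝ, u ⬝ᵥ v = u 0 * v 0 + u 1 * v 1 := by
    intro u v; simp [dotProduct, Fin.sum_univ_two]
  rw [hdc] at ha hc
  have hw' : w 0 ≠ 0 ∨ w 1 ≠ 0 := by
    by_contra h
    push_neg at h
    exact hw (funext fun i => by fin_cases i <;> simp [h.1, h.2])
  have hcross : a 0 * c 1 - a 1 * c 0 = 0 := by
    rcases hw' with h | h
    · have : (a 0 * c 1 - a 1 * c 0) * w 0 = 0 := by linear_combination c 1 * ha - a 1 * hc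
      exact (mul_eq_zero.mp this).resolve_right h
    · have : (a 0 * c 1 - a 1 * c 0) * w 1 = 0 := by linear_combination -c 0 * ha + a 0 * hc
      exact (mul_eq_zero.mp this).resolve_right h
  have ha' : a 0 ≠ 0 ∨ a 1 ≠ 0 := by
    by_contra h
    push_neg at h
    exact hane (funext fun i => by fin_cases i <;> simp [h.1, h.2])
  rcases ha' with h | h
  · refine ⟨c 0 / a 0, funext fun i => ?_⟩
    fin_cases i
    · simp [smul_eq_mul]
      exact (div_mul_cancel₀ _ h).symm
    · simp [smul_eq_mul]
      rw [div_mul_eq_mul_div, eq_div_iff h]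
      linear_combination hcross
  · refine ⟨c 1 / a 1, funext fun i => ?_⟩
    fin_cases i
    · simp [smul_eq_mul]
      rw [div_mul_eq_mul_div, eq_div_iff h]
      linear_combination -hcross
    · simp [smul_eq_mul]
      exact (div_mul_cancel₀ _ h).symm

set_option maxHeartbeats 1600000 in
/-- finite termination (in at most three steps) of the SMCG method with
`τ = 1` on a two-dimensional strictly convex quadratic, with an exact first step. -/
theorem stmt_12 (A : Matrix (Fin 2) (Fin 2) ℝ) (hAsymm : A.IsSymm) (hApd : A.PosDef)
    (b : Fin 2 → ℝ) (x g : ℕ → Fin 2 → ℝ)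
    (hg : ∀ k, g k = A.mulVec (x k) + b)
    (hx1 : x 1 = x 0 - ((g 0 ⬝ᵥ g 0) / (g 0 ⬝ᵥ A.mulVec (g 0))) • g 0)
    (hwell : ∀ k, 1 ≤ k → k ≤ 2 → g k ≠ 0 →
      ((x k - x (k - 1)) ⬝ᵥ (g k - g (k - 1)) ≠ 0 ∧
        (g k ⬝ᵥ g k) * ((x k - x (k - 1)) ⬝ᵥ (x k - x (k - 1))) -
          (g k ⬝ᵥ (x k - x (k - 1))) ^ 2 ≠ 0))
    (hstep : ∀ k, 1 ≤ k → k ≤ 2 → g k ≠ 0 →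
      x (k + 1) = x k +
        uCoef (g k) (x k - x (k - 1)) (g k - g (k - 1)) • g k +
        vCoef 1 (g k) (x k - x (k - 1)) (g k - g (k - 1)) • (x k - x (k - 1))) :
    ∃ j ≤ 3, g j = 0 := by
  by_cases h0 : g 0 = 0
  · exact ⟨0, by norm_num, h0⟩
  by_cases h1 : g 1 = 0
  · exact ⟨1, by norm_num, h1⟩
  by_cases h2 : g 2 = 0
  · exact ⟨2, by norm_num, h2⟩
  refine ⟨3, le_refl 3, ?_⟩
  -- basic facts
  have hgdiff : ∀ j k : ℕ, g j - g k = A.mulVec (x j - x k) := by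
    intro j k
    rw [hg j, hg k, Matrix.mulVec_sub]
    abel
  have hquad : (0:ℝ) < g 0 ⬝ᵥ A.mulVec (g 0) := by
    have := hApd.dotProduct_mulVec_pos h0
    simpa using this
  have hgg0 : g 0 ⬝ᵥ g 0 ≠ 0 := fun h => h0 (dotProduct_self_eq_zero.mp h)
  set a0 : ℝ := (g 0 ⬝ᵥ g 0) / (g 0 ⬝ᵥ A.mulVec (g 0)) with ha0
  have ha0ne : a0 ≠ 0 := div_ne_zero hgg0 (ne_of_gt hquad)
  have hg1 : g 1 = g 0 - a0 • A.mulVec (g 0) := by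
    rw [hg 1, hx1, Matrix.mulVec_sub, Matrix.mulVec_smul, hg 0]
    abel
  have h10 : g 1 ⬝ᵥ g 0 = 0 := by
    rw [hg1, sub_dotProduct, smul_dotProduct, smul_eq_mul,
      symm_dot A hAsymm, ha0, div_mul_cancel₀ _ (ne_of_gt hquad), sub_self]
  have hs0 : x 1 - x 0 = (-a0) • g 0 := by
    rw [hx1]
    simp [neg_smul]
  have h1s0 : g 1 ⬝ᵥ (x 1 - x 0) = 0 := by
    rw [hs0, dotProduct_smul, h10, smul_eq_mul, mul_zero]
  obtain ⟨hsy0, hD1⟩ := hwell 1 le_rfl (by norm_num) h1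
  simp only [Nat.sub_self] at hsy0 hD1
  have hy0 : g 1 - g 0 = A.mulVec (x 1 - x 0) := hgdiff 1 0
  -- coefficients of the first projected step
  have hu1 : uCoef (g 1) (x 1 - x 0) (g 1 - g 0) = -1 := by
    simp [uCoef, h1s0]
  have hv1 : vCoef 1 (g 1) (x 1 - x 0) (g 1 - g 0) =
      (g 1 ⬝ᵥ (g 1 - g 0)) / ((x 1 - x 0) ⬝ᵥ (g 1 - g 0)) := by
    simp [vCoef, h1s0]
  have hx2 : x 2 = x 1 + uCoef (g 1) (x 1 - x 0) (g 1 - g 0) • g 1 +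
      vCoef 1 (g 1) (x 1 - x 0) (g 1 - g 0) • (x 1 - x 0) := by
    have := hstep 1 le_rfl (by norm_num) h1
    simpa using this
  -- g 2 is orthogonal to s0 and hence to g 0
  have h2s0 : g 2 ⬝ᵥ (x 1 - x 0) = 0 := by
    have hg2 : g 2 = g 1 + A.mulVec (x 2 - x 1) := by
      have := hgdiff 2 1
      rw [← this]; abel
    have hx2' : x 2 - x 1 = uCoef (g 1) (x 1 - x 0) (g 1 - g 0) • g 1 +
        vCoef 1 (g 1) (x 1 - x 0) (g 1 - g 0) • (x 1 - x 0) := by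
      rw [hx2]; abel
    have e1 : A.mulVec (g 1) ⬝ᵥ (x 1 - x 0) = g 1 ⬝ᵥ (g 1 - g 0) := by
      rw [symm_dot A hAsymm, ← hy0]
    have e2 : A.mulVec (x 1 - x 0) ⬝ᵥ (x 1 - x 0) = (x 1 - x 0) ⬝ᵥ (g 1 - g 0) := by
      rw [symm_dot A hAsymm, ← hy0]
    rw [hg2, hx2', hu1, hv1, Matrix.mulVec_add, Matrix.mulVec_smul, Matrix.mulVec_smul]
    simp only [add_dotProduct, smul_dotProduct, smul_eq_mul, h1s0, e1, e2]
    rw [div_mul_cancel₀ _ hsy0]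
    ring
  have h20 : g 2 ⬝ᵥ g 0 = 0 := by
    rw [hs0, dotProduct_smul, smul_eq_mul] at h2s0
    rcases mul_eq_zero.mp h2s0 with h | h
    · exact absurd (neg_eq_zero.mp h) ha0ne
    · exact h
  -- g 2 is parallel to g 1, so y1 is parallel to g 2
  obtain ⟨c, hc⟩ := parallel_of_orth (g 0) (g 1) (g 2) h0 h10 h20 h1
  have hcne : c ≠ 0 := by
    rintro rfl
    exact h2 (by simp [hc])
  set μ : ℝ := 1 - c⁻¹ with hμdef
  have hmu : g 2 - g 1 = μ • g 2 := by
    have hg1' : g 1 = c⁻¹ • g 2 := by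
      rw [hc, smul_smul, inv_mul_cancel₀ hcne, one_smul]
    rw [hg1', hμdef, sub_smul, one_smul]
  obtain ⟨hsy1, hD2⟩ := hwell 2 (by norm_num) le_rfl h2
  simp only [show (2:ℕ) - 1 = 1 from rfl] at hsy1 hD2
  have hA1 : g 2 ⬝ᵥ (g 2 - g 1) = μ * (g 2 ⬝ᵥ g 2) := by
    rw [hmu, dotProduct_smul, smul_eq_mul]
  have hB1 : (x 2 - x 1) ⬝ᵥ (g 2 - g 1) = μ * (g 2 ⬝ᵥ (x 2 - x 1)) := by
    rw [hmu, dotProduct_smul, smul_eq_mul, dotProduct_comm]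
  have hC1 : (g 2 - g 1) ⬝ᵥ (g 2 - g 1) = μ ^ 2 * (g 2 ⬝ᵥ g 2) := by
    rw [hmu, dotProduct_smul, smul_dotProduct, smul_eq_mul, smul_eq_mul]
    ring
  rw [hB1] at hsy1
  have hμne : μ ≠ 0 := fun h => hsy1 (by rw [h, zero_mul])
  have hgs2 : g 2 ⬝ᵥ (x 2 - x 1) ≠ 0 := fun h => hsy1 (by rw [h, mul_zero])
  have hgg2 : g 2 ⬝ᵥ g 2 ≠ 0 := fun h => h2 (dotProduct_self_eq_zero.mp h)
  -- coefficients of the second projected step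
  have hz : (g 2 ⬝ᵥ g 2) * (g 2 ⬝ᵥ (x 2 - x 1)) -
      μ * (g 2 ⬝ᵥ g 2) * (g 2 ⬝ᵥ (x 2 - x 1)) ^ 2 / (μ * (g 2 ⬝ᵥ (x 2 - x 1))) = 0 := by
    rw [sub_eq_zero, eq_div_iff (mul_ne_zero hμne hgs2)]
    ring
  have hu2 : uCoef (g 2) (x 2 - x 1) (g 2 - g 1) = 0 := by
    rw [uCoef, hA1, hB1, hz, zero_div, zero_mul, sub_zero]
    have hone : μ * (g 2 ⬝ᵥ g 2) * (g 2 ⬝ᵥ (x 2 - x 1)) /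
        ((g 2 ⬝ᵥ g 2) * (μ * (g 2 ⬝ᵥ (x 2 - x 1)))) = 1 := by
      rw [div_eq_one_iff_eq (mul_ne_zero hgg2 (mul_ne_zero hμne hgs2))]
      ring
    rw [hone]
    norm_num
  have hv2 : vCoef 1 (g 2) (x 2 - x 1) (g 2 - g 1) = -μ⁻¹ := by
    rw [vCoef, hA1, hB1, hC1, hz, zero_div, add_zero]
    exact vkey μ _ _ hμne hgg2 hgs2
  -- the third step kills the gradient
  have hx3 : x 3 = x 2 + uCoef (g 2) (x 2 - x 1) (g 2 - g 1) • g 2 +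
      vCoef 1 (g 2) (x 2 - x 1) (g 2 - g 1) • (x 2 - x 1) := by
    have := hstep 2 (by norm_num) le_rfl h2
    simpa only [show (2:ℕ) - 1 = 1 from rfl] using this
  have hg3 : g 3 = g 2 + A.mulVec (x 3 - x 2) := by
    have := hgdiff 3 2
    rw [← this]; abel
  have hx3' : x 3 - x 2 = (-μ⁻¹) • (x 2 - x 1) := by
    rw [hx3, hu2, hv2]
    simp
  rw [hg3, hx3', Matrix.mulVec_smul, ← hgdiff 2 1, hmu, smul_smul]
  rw [neg_mul, inv_mul_cancel₀ hμne, neg_smul, one_smul, add_neg_cancel]
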